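/- Let Φ be continuous, positive, T-periodic with mean Φ̄ and 0 < σ̃ < Φ̄. Then the positive T-periodic solution of R' = μR(Φ(t)P₀(R) − σ̃/3) (μ > 0) is unique. -/

import Mathlib

open Real Set

noncomputable def P0 (x : ℝ) : ℝ := (x * (Real.cosh x / Real.sinh x) - 1) / x ^ 2


lemma sinh_lt_mul_cosh {x : ℝ} (hx : 0 < x) : Real.sinh x < x * Real.cosh x := by
  have key : StrictMonoOn (fun x => x * Real.cosh x - Real.sinh x) (Ici 0) := by
    apply strictMonoOn_of_deriv_pos (convex_Ici 0)
    · fun_prop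
    · intro y hy
      rw [interior_Ici] at hy
      have h : HasDerivAt (fun x => x * Real.cosh x - Real.sinh x) (y * Real.sinh y) y := by
        have := ((hasDerivAt_id y).mul (Real.hasDerivAt_cosh y)).sub (Real.hasDerivAt_sinh y)
        refine this.congr_deriv (Eq.symm ?_); simp only [id_eq]; ring
      rw [h.deriv]
      exact mul_pos hy (Real.sinh_pos_iff.2 hy)
  have := key (self_mem_Ici) (le_of_lt hx : (0:ℝ) ≤ x) hx
  simp at this
  linarith

lemma aux_h_pos {x : ℝ} (hx : 0 < x) :
    0 < x * (Real.cosh x ^ 2 + Real.sinh x ^ 2) + 2 * x - 3 * (Real.sinh x * Real.cosh x) := by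
  set h : ℝ → ℝ := fun x => x * (Real.cosh x ^ 2 + Real.sinh x ^ 2) + 2 * x - 3 * (Real.sinh x * Real.cosh x) with hh
  have key : StrictMonoOn h (Ici 0) := by
    apply strictMonoOn_of_deriv_pos (convex_Ici 0)
    · fun_prop
    · intro y hy
      rw [interior_Ici] at hy
      have hd : HasDerivAt h (4 * Real.sinh y * (y * Real.cosh y - Real.sinh y)) y := by
        have := (((hasDerivAt_id y).mul
            (((Real.hasDerivAt_cosh y).pow 2).add ((Real.hasDerivAt_sinh y).pow 2))).add
            ((hasDerivAt_id y).const_mul 2)).sub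
            (((Real.hasDerivAt_sinh y).mul (Real.hasDerivAt_cosh y)).const_mul 3)
        refine this.congr_deriv (Eq.symm ?_)
        simp only [id_eq, Pi.add_apply, Pi.mul_apply, Pi.pow_apply]
        push_cast
        linear_combination 2 * Real.cosh_sq y
      rw [hd.deriv]
      have h1 := Real.sinh_pos_iff.2 hy
      have h2 := sinh_lt_mul_cosh hy
      nlinarith
  have := key self_mem_Ici (le_of_lt hx : (0:ℝ) ≤ x) hx
  simp [hh] at this
  linarith

lemma aux_f_pos {x : ℝ} (hx : 0 < x) :
    0 < x * Real.sinh x * Real.cosh x + x ^ 2 - 2 * Real.sinh x ^ 2 := by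
  set f : ℝ → ℝ := fun x => x * Real.sinh x * Real.cosh x + x ^ 2 - 2 * Real.sinh x ^ 2 with hf
  have key : StrictMonoOn f (Ici 0) := by
    apply strictMonoOn_of_deriv_pos (convex_Ici 0)
    · fun_prop
    · intro y hy
      rw [interior_Ici] at hy
      have hd : HasDerivAt f
          (y * (Real.cosh y ^ 2 + Real.sinh y ^ 2) + 2 * y - 3 * (Real.sinh y * Real.cosh y)) y := by
        have := ((((hasDerivAt_id y).mul (Real.hasDerivAt_sinh y)).mul (Real.hasDerivAt_cosh y)).add
            ((hasDerivAt_id y).pow 2)).sub (((Real.hasDerivAt_sinh y).pow 2).const_mul 2)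
        refine this.congr_deriv (Eq.symm ?_)
        simp only [id_eq, Pi.add_apply, Pi.mul_apply, Pi.pow_apply]
        push_cast
        ring
      rw [hd.deriv]
      exact aux_h_pos hy
  have := key self_mem_Ici (le_of_lt hx : (0:ℝ) ≤ x) hx
  simp [hf] at this
  linarith

noncomputable def Q0 (x : ℝ) : ℝ := (x * Real.cosh x - Real.sinh x) / (x ^ 2 * Real.sinh x)

lemma P0_eq_Q0 {x : ℝ} (hx : 0 < x) : P0 x = Q0 x := by
  have hs : Real.sinh x ≠ 0 := ne_of_gt (Real.sinh_pos_iff.2 hx)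
  have hx' : x ≠ 0 := ne_of_gt hx
  unfold P0 Q0
  field_simp

lemma Q0_hasDeriv {y : ℝ} (hy : 0 < y) :
    HasDerivAt Q0 ((y * Real.sinh y * (y ^ 2 * Real.sinh y) -
      (y * Real.cosh y - Real.sinh y) * (2 * y * Real.sinh y + y ^ 2 * Real.cosh y)) /
      (y ^ 2 * Real.sinh y) ^ 2) y := by
  have hs : Real.sinh y ≠ 0 := ne_of_gt (Real.sinh_pos_iff.2 hy)
  have hD : (y ^ 2 * Real.sinh y) ≠ 0 := by positivity
  have hN : HasDerivAt (fun x => x * Real.cosh x - Real.sinh x) (y * Real.sinh y) y := by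
    have := ((hasDerivAt_id y).mul (Real.hasDerivAt_cosh y)).sub (Real.hasDerivAt_sinh y)
    refine this.congr_deriv (Eq.symm ?_); simp only [id_eq]; ring
  have hDd : HasDerivAt (fun x => x ^ 2 * Real.sinh x)
      (2 * y * Real.sinh y + y ^ 2 * Real.cosh y) y := by
    have := (hasDerivAt_pow 2 y).mul (Real.hasDerivAt_sinh y)
    refine this.congr_deriv (Eq.symm ?_); push_cast; ring
  exact hN.div hDd hD

lemma Q0_deriv_neg {y : ℝ} (hy : 0 < y) :
    (y * Real.sinh y * (y ^ 2 * Real.sinh y) -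
      (y * Real.cosh y - Real.sinh y) * (2 * y * Real.sinh y + y ^ 2 * Real.cosh y)) /
      (y ^ 2 * Real.sinh y) ^ 2 < 0 := by
  have hs : 0 < Real.sinh y := Real.sinh_pos_iff.2 hy
  apply div_neg_of_neg_of_pos
  · have hf := aux_f_pos hy
    have heq : y * Real.sinh y * (y ^ 2 * Real.sinh y) -
        (y * Real.cosh y - Real.sinh y) * (2 * y * Real.sinh y + y ^ 2 * Real.cosh y) =
        -(y * (y * Real.sinh y * Real.cosh y + y ^ 2 - 2 * Real.sinh y ^ 2)) := by
      linear_combination (-(y ^ 3)) * Real.cosh_sq y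
    rw [heq]
    linarith [mul_pos hy hf]
  · positivity

lemma Q0_strictAnti : StrictAntiOn Q0 (Set.Ioi 0) := by
  apply strictAntiOn_of_deriv_neg (convex_Ioi 0)
  · exact fun y hy => ((Q0_hasDeriv hy).continuousAt).continuousWithinAt
  · intro y hy
    rw [interior_Ioi] at hy
    rw [(Q0_hasDeriv hy).deriv]
    exact Q0_deriv_neg hy

lemma P0_lt {a b : ℝ} (ha : 0 < a) (hab : a < b) : P0 b < P0 a := by
  rw [P0_eq_Q0 ha, P0_eq_Q0 (ha.trans hab)]
  exact Q0_strictAnti ha (ha.trans hab) hab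

theorem periodic_solution_unique
    (T : ℝ) (hT : 0 < T) (Φ : ℝ → ℝ) (hΦc : Continuous Φ)
    (hΦpos : ∀ t, 0 < Φ t) (hΦper : ∀ t, Φ (t + T) = Φ t)
    (μ σ : ℝ) (hμ : 0 < μ) (hσ : 0 < σ)
    (hσlt : σ < (1 / T) * ∫ t in (0 : ℝ)..T, Φ t)
    (R₁ R₂ : ℝ → ℝ)
    (hR₁pos : ∀ t, 0 ≤ t → 0 < R₁ t)
    (hR₁ODE : ∀ t, 0 ≤ t → HasDerivAt R₁ (μ * R₁ t * (Φ t * P0 (R₁ t) - σ / 3)) t)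
    (hR₁per : ∀ t, 0 ≤ t → R₁ (t + T) = R₁ t)
    (hR₂pos : ∀ t, 0 ≤ t → 0 < R₂ t)
    (hR₂ODE : ∀ t, 0 ≤ t → HasDerivAt R₂ (μ * R₂ t * (Φ t * P0 (R₂ t) - σ / 3)) t)
    (hR₂per : ∀ t, 0 ≤ t → R₂ (t + T) = R₂ t) :
    ∀ t, 0 ≤ t → R₁ t = R₂ t := by
  set W : ℝ → ℝ := fun s => Real.log (R₁ s) - Real.log (R₂ s) with hWdef
  set V : ℝ → ℝ := fun s => (W s) ^ 2 with hVdef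
  -- derivative of W
  have hW : ∀ t, 0 ≤ t → HasDerivAt W (μ * Φ t * (P0 (R₁ t) - P0 (R₂ t))) t := by
    intro t ht
    have hn1 : R₁ t ≠ 0 := ne_of_gt (hR₁pos t ht)
    have hn2 : R₂ t ≠ 0 := ne_of_gt (hR₂pos t ht)
    have h1 := (hR₁ODE t ht).log hn1
    have h2 := (hR₂ODE t ht).log hn2
    have h3 := h1.sub h2
    refine h3.congr_deriv (Eq.symm ?_)
    field_simp
    ring
  -- derivative of V
  have hV : ∀ t, 0 ≤ t →
      HasDerivAt V (2 * W t * (μ * Φ t * (P0 (R₁ t) - P0 (R₂ t)))) t := by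
    intro t ht
    have := (hW t ht).pow 2
    refine this.congr_deriv (Eq.symm ?_)
    push_cast
    ring
  -- sign of the derivative of V
  have hsign : ∀ t, 0 ≤ t → R₁ t ≠ R₂ t →
      2 * W t * (μ * Φ t * (P0 (R₁ t) - P0 (R₂ t))) < 0 := by
    intro t ht hne
    rcases lt_or_gt_of_ne hne with h | h
    · have hlog : Real.log (R₁ t) < Real.log (R₂ t) :=
        Real.log_lt_log (hR₁pos t ht) h
      have hP : P0 (R₂ t) < P0 (R₁ t) := P0_lt (hR₁pos t ht) h
      have hΦt := hΦpos t
      have hWneg : W t < 0 := by simp only [hWdef]; linarith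
      have hfac : 0 < μ * Φ t * (P0 (R₁ t) - P0 (R₂ t)) := by
        apply mul_pos (mul_pos hμ hΦt); linarith
      nlinarith
    · have hlog : Real.log (R₂ t) < Real.log (R₁ t) :=
        Real.log_lt_log (hR₂pos t ht) h
      have hP : P0 (R₁ t) < P0 (R₂ t) := P0_lt (hR₂pos t ht) h
      have hΦt := hΦpos t
      have hWpos : 0 < W t := by simp only [hWdef]; linarith
      have hfac : μ * Φ t * (P0 (R₁ t) - P0 (R₂ t)) < 0 := by
        have := mul_pos hμ hΦt; nlinarith
      nlinarith
  have hsign' : ∀ t, 0 ≤ t →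
      2 * W t * (μ * Φ t * (P0 (R₁ t) - P0 (R₂ t))) ≤ 0 := by
    intro t ht
    by_cases hne : R₁ t = R₂ t
    · simp [hWdef, hne]
    · exact le_of_lt (hsign t ht hne)
  -- V is antitone on [0, ∞)
  have hVanti : AntitoneOn V (Set.Ici 0) := by
    apply antitoneOn_of_deriv_nonpos (convex_Ici 0)
    · exact fun t ht => (hV t ht).continuousAt.continuousWithinAt
    · intro t ht
      rw [interior_Ici] at ht
      exact ((hV t (le_of_lt ht)).differentiableAt).differentiableWithinAt
    · intro t ht
      rw [interior_Ici] at ht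
      rw [(hV t (le_of_lt ht)).deriv]
      exact hsign' t (le_of_lt ht)
  -- periodicity of V
  have hVper : ∀ t, 0 ≤ t → V (t + T) = V t := by
    intro t ht
    simp only [hVdef, hWdef, hR₁per t ht, hR₂per t ht]
  have hVn : ∀ n : ℕ, V (n * T) = V 0 := by
    intro n
    induction n with
    | zero => norm_num
    | succ k ih =>
        have hk : (0:ℝ) ≤ k * T := by positivity
        have : ((k : ℝ) + 1) * T = k * T + T := by ring
        push_cast
        rw [this, hVper _ hk, ih]
  -- V is constant on [0,∞)
  have hVconst : ∀ t, 0 ≤ t → V t = V 0 := by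
    intro t ht
    obtain ⟨n, hn⟩ := exists_nat_ge (t / T)
    have htn : t ≤ n * T := by
      rw [div_le_iff₀ hT] at hn
      linarith
    have h1 : V t ≤ V 0 := hVanti Set.self_mem_Ici ht ht
    have h2 : V (n * T) ≤ V t := hVanti ht (Set.mem_Ici.mpr (by positivity)) htn
    rw [hVn n] at h2
    linarith
  -- V 0 = 0
  have hV0 : V 0 = 0 := by
    by_contra h
    have hne : R₁ 0 ≠ R₂ 0 := by
      intro he
      apply h
      simp [hVdef, hWdef, he]
    have hc : 2 * W 0 * (μ * Φ 0 * (P0 (R₁ 0) - P0 (R₂ 0))) < 0 :=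
      hsign 0 le_rfl hne
    have h1 : HasDerivWithinAt V
        (2 * W 0 * (μ * Φ 0 * (P0 (R₁ 0) - P0 (R₂ 0)))) (Set.Ici 0) 0 :=
      (hV 0 le_rfl).hasDerivWithinAt
    have h2 : HasDerivWithinAt V 0 (Set.Ici 0) 0 := by
      have hcst : HasDerivWithinAt (fun _ : ℝ => V 0) 0 (Set.Ici 0) 0 :=
        (hasDerivAt_const (0:ℝ) (V 0)).hasDerivWithinAt
      exact hcst.congr (fun y hy => hVconst y hy) (hVconst 0 le_rfl)
    have := UniqueDiffWithinAt.eq_deriv (Set.Ici 0)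
      (uniqueDiffOn_Ici 0 0 Set.self_mem_Ici) h1 h2
    linarith
  -- conclude
  intro t ht
  have hVt : V t = 0 := by rw [hVconst t ht, hV0]
  have hWt : W t = 0 := sq_eq_zero_iff.mp hVt
  have hlog : Real.log (R₁ t) = Real.log (R₂ t) := by
    have : Real.log (R₁ t) - Real.log (R₂ t) = 0 := hWt
    linarith
  have := congrArg Real.exp hlog
  rwa [Real.exp_log (hR₁pos t ht), Real.exp_log (hR₂pos t ht)] at this
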